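/- arXiv:2508.09750 — 2 statements merged into one kernel-verified Lean document; each statement's English description precedes it below -/
import Mathlib

section
/- Let q be a prime and let N, X be positive real numbers with N·X ≤ q. Let f be a completely multiplicative function with |f(n)| = 1 for all n, let r : ℕ → ℝ≥0 be a non-negative function, and set r_f(n) := f(n)r(n) and R_χ := ∑_{a ≤ X} r_f(a)χ(a). Then M_2 := ∑_{χ ≠ χ_0} |∑_{n ≤ N} f(n)χ(n)|^2 |R_χ|^2 satisfies M_2 ≥ φ(q) · ∑_{m,n ≤ N, a,b ≤ X, an = bm, q ∤ an} r(a)r(b) − q·N · ∑_{n ≤ X} r(n)^2. -/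
open Finset

section aux
variable {q : ℕ} [NeZero q]

lemma aux_abs_one (χ : DirichletCharacter ℂ q) {x : ZMod q} (hx : IsUnit x) :
    ‖χ x‖ = 1 := by
  obtain ⟨u, rfl⟩ := hx
  have hpow : (χ (u : ZMod q)) ^ q.totient = 1 := by
    rw [← map_pow, ← Units.val_pow_eq_pow_val, ZMod.pow_totient, Units.val_one, map_one]
  exact Complex.norm_eq_one_of_pow_eq_one hpow
    (Nat.totient_pos.mpr (NeZero.pos q)).ne'

lemma aux_abs_le_one (χ : DirichletCharacter ℂ q) (x : ZMod q) :
    ‖χ x‖ ≤ 1 := by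
  by_cases hx : IsUnit x
  · exact (aux_abs_one χ hx).le
  · simp [χ.map_nonunit hx]

lemma aux_conj (χ : DirichletCharacter ℂ q) {x : ZMod q} (hx : IsUnit x) :
    (starRingEnd ℂ) (χ x) = χ x⁻¹ := by
  have h1 : χ x⁻¹ * χ x = 1 := by
    rw [← map_mul, ZMod.inv_mul_of_unit x hx, map_one]
  have h2 : χ x⁻¹ = (χ x)⁻¹ := eq_inv_of_mul_eq_one_left h1
  rw [h2, Complex.inv_eq_conj]
  exact aux_abs_one χ hx

lemma aux_orth (x y : ZMod q) :
    ∑ χ : DirichletCharacter ℂ q, χ x * (starRingEnd ℂ) (χ y) =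
      if x = y ∧ IsUnit x then (q.totient : ℂ) else 0 := by
  by_cases hy : IsUnit y
  · have h : ∀ χ : DirichletCharacter ℂ q, χ x * (starRingEnd ℂ) (χ y) = χ y⁻¹ * χ x := by
      intro χ; rw [aux_conj χ hy, mul_comm]
    rw [Finset.sum_congr rfl fun χ _ => h χ,
      DirichletCharacter.sum_char_inv_mul_char_eq ℂ hy x]
    by_cases hxy : x = y
    · subst hxy
      simp [hy]
    · simp [hxy, Ne.symm hxy]
  · have h : ∀ χ : DirichletCharacter ℂ q, χ x * (starRingEnd ℂ) (χ y) = 0 := by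
      intro χ; rw [χ.map_nonunit hy, map_zero, mul_zero]
    rw [Finset.sum_congr rfl fun χ _ => h χ, Finset.sum_const_zero]
    rw [if_neg]
    rintro ⟨rfl, hx⟩
    exact hy hx

end aux

/-- **Lower bound for `M₂`.** For a prime `q`, positive reals `N, X` with
`N·X ≤ q`, a completely multiplicative `f` of modulus `1`, a non-negative
`r : ℕ → ℝ`, and `r_f(n) = f(n)r(n)`, the quantity
`M₂ = ∑_{χ ≠ χ₀} |∑_{n ≤ N} f(n)χ(n)|² |∑_{a ≤ X} r_f(a)χ(a)|²` satisfies
`M₂ ≥ φ(q) ∑_{m,n ≤ N, a,b ≤ X, an = bm, q ∤ an} r(a)r(b) − qN ∑_{n ≤ X} r(n)²`. -/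
theorem stmt_5 (q : ℕ) [Fact q.Prime] (N X : ℝ) (hN : 0 < N) (hX : 0 < X)
    (hNX : N * X ≤ q)
    (f : ℕ → ℂ) (hf : ∀ m n : ℕ, f (m * n) = f m * f n)
    (hf1 : ∀ n : ℕ, 0 < n → ‖f n‖ = 1)
    (r : ℕ → ℝ) (hr : ∀ n : ℕ, 0 ≤ r n)
    (rf : ℕ → ℂ) (hrf : ∀ n : ℕ, rf n = f n * (r n : ℂ))
    (M₂ : ℝ)
    (hM₂ : M₂ = ∑ χ ∈ Finset.univ.filter (fun χ : DirichletCharacter ℂ q => χ ≠ 1),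
      (‖∑ n ∈ Finset.Icc 1 ⌊N⌋₊, f n * χ (n : ZMod q)‖) ^ 2 *
        (‖∑ a ∈ Finset.Icc 1 ⌊X⌋₊, rf a * χ (a : ZMod q)‖) ^ 2) :
    M₂ ≥ (Nat.totient q : ℝ) *
        (∑ m ∈ Finset.Icc 1 ⌊N⌋₊, ∑ n ∈ Finset.Icc 1 ⌊N⌋₊,
          ∑ a ∈ Finset.Icc 1 ⌊X⌋₊, ∑ b ∈ Finset.Icc 1 ⌊X⌋₊,
            if a * n = b * m ∧ ¬ (q ∣ a * n) then r a * r b else 0) -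
      (q : ℝ) * N * ∑ n ∈ Finset.Icc 1 ⌊X⌋₊, (r n) ^ 2 := by
  have hqp : q.Prime := Fact.out
  haveI : NeZero q := ⟨hqp.ne_zero⟩
  set K := Finset.Icc 1 ⌊N⌋₊ with hK
  set A := Finset.Icc 1 ⌊X⌋₊ with hA
  set F : DirichletCharacter ℂ q → ℝ := fun χ =>
    (‖∑ n ∈ K, f n * χ (n : ZMod q)‖) ^ 2 *
      (‖∑ a ∈ A, rf a * χ (a : ZMod q)‖) ^ 2 with hF
  set D : ℝ := ∑ m ∈ K, ∑ n ∈ K, ∑ a ∈ A, ∑ b ∈ A,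
      if a * n = b * m ∧ ¬ (q ∣ a * n) then r a * r b else 0 with hD
  -- splitting off the principal character
  have hsplit : M₂ = (∑ χ : DirichletCharacter ℂ q, F χ) - F 1 := by
    rw [hM₂]
    have h := Finset.sum_filter_add_sum_filter_not Finset.univ
      (fun χ : DirichletCharacter ℂ q => χ ≠ 1) F
    have h2 : Finset.univ.filter (fun χ : DirichletCharacter ℂ q => ¬ χ ≠ 1) = {1} := by
      ext χ; simp [not_not]
    rw [h2, Finset.sum_singleton] at h
    linarith
  -- basic size facts
  have hXN : ⌊X⌋₊ * ⌊N⌋₊ ≤ q := by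
    have h1 : ((⌊X⌋₊ * ⌊N⌋₊ : ℕ) : ℝ) ≤ (q : ℝ) := by
      push_cast
      calc (⌊X⌋₊ : ℝ) * (⌊N⌋₊ : ℝ) ≤ X * N :=
            mul_le_mul (Nat.floor_le hX.le) (Nat.floor_le hN.le) (by positivity) hX.le
        _ = N * X := mul_comm _ _
        _ ≤ q := hNX
    exact_mod_cast h1
  have hunit_iff : ∀ k : ℕ, IsUnit ((k : ZMod q)) ↔ ¬ q ∣ k := by
    intro k
    rw [isUnit_iff_ne_zero, ne_eq, ZMod.natCast_eq_zero_iff]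
  have hcond : ∀ n ∈ K, ∀ a ∈ A, ∀ m ∈ K, ∀ b ∈ A,
      ((((a * n : ℕ) : ZMod q) = ((b * m : ℕ) : ZMod q) ∧ IsUnit (((a * n : ℕ) : ZMod q)))
        ↔ (a * n = b * m ∧ ¬ q ∣ a * n)) := by
    intro n hn a ha m hm b hb
    rw [hK, Finset.mem_Icc] at hn hm
    rw [hA, Finset.mem_Icc] at ha hb
    have han : a * n ≤ q := le_trans (Nat.mul_le_mul ha.2 hn.2) hXN
    have hbm : b * m ≤ q := le_trans (Nat.mul_le_mul hb.2 hm.2) hXN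
    constructor
    · rintro ⟨hcast, hu⟩
      have hnd1 : ¬ q ∣ a * n := (hunit_iff _).mp hu
      have hnd2 : ¬ q ∣ b * m := (hunit_iff _).mp (hcast ▸ hu)
      have hlt1 : a * n < q := lt_of_le_of_ne han (fun h => hnd1 (by rw [h]))
      have hlt2 : b * m < q := lt_of_le_of_ne hbm (fun h => hnd2 (by rw [h]))
      exact ⟨Nat.ModEq.eq_of_lt_of_lt ((ZMod.natCast_eq_natCast_iff _ _ _).mp hcast) hlt1 hlt2,
        hnd1⟩
    · rintro ⟨heq, hnd⟩
      exact ⟨by rw [heq], (hunit_iff _).mpr hnd⟩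
  -- coefficient computation
  have hcoef : ∀ n ∈ K, ∀ a ∈ A, ∀ m ∈ K, ∀ b ∈ A, a * n = b * m →
      f n * rf a * ((starRingEnd ℂ) (f m) * (starRingEnd ℂ) (rf b)) = ((r a * r b : ℝ) : ℂ) := by
    intro n hn a ha m hm b hb heq
    rw [hK, Finset.mem_Icc] at hn hm
    rw [hA, Finset.mem_Icc] at ha hb
    have hpos : 0 < a * n := Nat.mul_pos ha.1 hn.1
    have h4 : f (a * n) * (starRingEnd ℂ) (f (a * n)) = 1 := by
      rw [Complex.mul_conj, Complex.normSq_eq_norm_sq, hf1 _ hpos]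
      norm_num
    calc f n * rf a * ((starRingEnd ℂ) (f m) * (starRingEnd ℂ) (rf b))
        = (f a * f n) * ((starRingEnd ℂ) (f b * f m)) * ((r a : ℂ) * (r b : ℂ)) := by
          simp only [hrf, map_mul, Complex.conj_ofReal]
          ring
      _ = f (a * n) * (starRingEnd ℂ) (f (a * n)) * ((r a : ℂ) * (r b : ℂ)) := by
          rw [← hf a n, ← hf b m, heq]
      _ = ((r a * r b : ℝ) : ℂ) := by rw [h4]; push_cast; ring
  have habs : ∀ z w : ℂ, ((‖z‖ ^ 2 * ‖w‖ ^ 2 : ℝ) : ℂ)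
      = (z * w) * (starRingEnd ℂ) (z * w) := by
    intro z w
    rw [Complex.sq_norm, Complex.sq_norm, map_mul]
    push_cast
    rw [← Complex.mul_conj, ← Complex.mul_conj]
    ring
  have stepA : ∀ χ : DirichletCharacter ℂ q, ((F χ : ℝ) : ℂ) =
      ∑ n ∈ K, ∑ m ∈ K, ∑ a ∈ A, ∑ b ∈ A,
        (f n * rf a * ((starRingEnd ℂ) (f m) * (starRingEnd ℂ) (rf b))) *
          (χ ((a * n : ℕ) : ZMod q) * (starRingEnd ℂ) (χ ((b * m : ℕ) : ZMod q))) := by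
    intro χ
    rw [hF]
    dsimp only
    rw [habs]
    have e1 : (∑ n ∈ K, f n * χ (n : ZMod q)) * (∑ a ∈ A, rf a * χ (a : ZMod q))
        = ∑ n ∈ K, ∑ a ∈ A, (f n * rf a) * χ ((a * n : ℕ) : ZMod q) := by
      rw [Finset.sum_mul_sum]
      refine Finset.sum_congr rfl fun n _ => Finset.sum_congr rfl fun a _ => ?_
      push_cast
      rw [map_mul]
      ring
    rw [e1]
    simp only [map_sum, map_mul]
    rw [Finset.sum_mul_sum]
    refine Finset.sum_congr rfl fun n _ => Finset.sum_congr rfl fun m _ => ?_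
    rw [Finset.sum_mul_sum]
    refine Finset.sum_congr rfl fun a _ => Finset.sum_congr rfl fun b _ => ?_
    ring
  have stepB : (∑ χ : DirichletCharacter ℂ q, ((F χ : ℝ) : ℂ))
      = ∑ n ∈ K, ∑ m ∈ K, ∑ a ∈ A, ∑ b ∈ A,
        (f n * rf a * ((starRingEnd ℂ) (f m) * (starRingEnd ℂ) (rf b))) *
          (if ((a * n : ℕ) : ZMod q) = ((b * m : ℕ) : ZMod q) ∧
              IsUnit (((a * n : ℕ) : ZMod q)) then (q.totient : ℂ) else 0) := by
    rw [Finset.sum_congr rfl fun χ _ => stepA χ]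
    rw [Finset.sum_comm]
    refine Finset.sum_congr rfl fun n _ => ?_
    rw [Finset.sum_comm]
    refine Finset.sum_congr rfl fun m _ => ?_
    rw [Finset.sum_comm]
    refine Finset.sum_congr rfl fun a _ => ?_
    rw [Finset.sum_comm]
    refine Finset.sum_congr rfl fun b _ => ?_
    rw [← Finset.mul_sum, aux_orth]
  have stepC : (∑ χ : DirichletCharacter ℂ q, F χ) = (q.totient : ℝ) * D := by
    have h1 : (∑ χ : DirichletCharacter ℂ q, ((F χ : ℝ) : ℂ))
        = ((q.totient : ℝ) : ℂ) * ((D : ℝ) : ℂ) := by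
      rw [stepB]
      have h2 : ∀ n ∈ K, ∀ m ∈ K, ∀ a ∈ A, ∀ b ∈ A,
          (f n * rf a * ((starRingEnd ℂ) (f m) * (starRingEnd ℂ) (rf b))) *
            (if ((a * n : ℕ) : ZMod q) = ((b * m : ℕ) : ZMod q) ∧
                IsUnit (((a * n : ℕ) : ZMod q)) then (q.totient : ℂ) else 0)
          = (q.totient : ℂ) *
              (if a * n = b * m ∧ ¬ q ∣ a * n then ((r a * r b : ℝ) : ℂ) else 0) := by
        intro n hn m hm a ha b hb
        by_cases hQ : a * n = b * m ∧ ¬ q ∣ a * n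
        · rw [if_pos ((hcond n hn a ha m hm b hb).mpr hQ), if_pos hQ,
            hcoef n hn a ha m hm b hb hQ.1]
          ring
        · rw [if_neg (fun hP => hQ ((hcond n hn a ha m hm b hb).mp hP)), if_neg hQ,
            mul_zero, mul_zero]
      rw [Finset.sum_congr rfl fun n hn => Finset.sum_congr rfl fun m hm =>
        Finset.sum_congr rfl fun a ha => Finset.sum_congr rfl fun b hb => h2 n hn m hm a ha b hb]
      simp only [← Finset.mul_sum]
      have hre : (∑ n ∈ K, ∑ m ∈ K, ∑ a ∈ A, ∑ b ∈ A,
            (if a * n = b * m ∧ ¬ q ∣ a * n then ((r a * r b : ℝ) : ℂ) else 0))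
          = ∑ m ∈ K, ∑ n ∈ K, ∑ a ∈ A, ∑ b ∈ A,
            (if a * n = b * m ∧ ¬ q ∣ a * n then ((r a * r b : ℝ) : ℂ) else 0) :=
        Finset.sum_comm
      rw [hre, hD]
      push_cast [apply_ite (fun x : ℝ => (x : ℂ))]
      norm_cast
    have h3 : ((∑ χ : DirichletCharacter ℂ q, F χ : ℝ) : ℂ)
        = (((q.totient : ℝ) * D : ℝ) : ℂ) := by
      rw [Complex.ofReal_sum, Complex.ofReal_mul, h1]
    exact_mod_cast h3
  -- principal character bound
  have hsum_nonneg : 0 ≤ ∑ a ∈ A, r a ^ 2 := Finset.sum_nonneg fun a _ => sq_nonneg _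
  have hP : F 1 ≤ (q : ℝ) * N * ∑ a ∈ A, r a ^ 2 := by
    have hSb : ‖∑ n ∈ K, f n * (1 : DirichletCharacter ℂ q) (n : ZMod q)‖
        ≤ (⌊N⌋₊ : ℝ) := by
      refine le_trans (norm_sum_le _ _) ?_
      have hone : ∀ n ∈ K, ‖f n * (1 : DirichletCharacter ℂ q) (n : ZMod q)‖ ≤ 1 := by
        intro n hn
        rw [hK, Finset.mem_Icc] at hn
        rw [norm_mul, hf1 n hn.1, one_mul]
        exact aux_abs_le_one _ _
      calc ∑ n ∈ K, ‖f n * (1 : DirichletCharacter ℂ q) (n : ZMod q)‖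
          ≤ ∑ _n ∈ K, (1 : ℝ) := Finset.sum_le_sum hone
        _ = (⌊N⌋₊ : ℝ) := by rw [Finset.sum_const, hK, Nat.card_Icc]; simp
    have hRb : ‖∑ a ∈ A, rf a * (1 : DirichletCharacter ℂ q) (a : ZMod q)‖
        ≤ ∑ a ∈ A, r a := by
      refine le_trans (norm_sum_le _ _) (Finset.sum_le_sum ?_)
      intro a ha
      rw [hA, Finset.mem_Icc] at ha
      rw [norm_mul, hrf, norm_mul, hf1 a ha.1, one_mul, Complex.norm_real, Real.norm_eq_abs, abs_of_nonneg (hr a)]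
      calc r a * ‖(1 : DirichletCharacter ℂ q) (a : ZMod q)‖ ≤ r a * 1 :=
            mul_le_mul_of_nonneg_left (aux_abs_le_one _ _) (hr a)
        _ = r a := mul_one _
    have hCS : (∑ a ∈ A, r a) ^ 2 ≤ (⌊X⌋₊ : ℝ) * ∑ a ∈ A, r a ^ 2 := by
      have h := sq_sum_le_card_mul_sum_sq (s := A) (f := r)
      have hcard : ((A.card : ℕ) : ℝ) = (⌊X⌋₊ : ℝ) := by rw [hA, Nat.card_Icc]; simp
      calc (∑ a ∈ A, r a) ^ 2 ≤ ((A.card : ℕ) : ℝ) * ∑ a ∈ A, r a ^ 2 := h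
        _ = (⌊X⌋₊ : ℝ) * ∑ a ∈ A, r a ^ 2 := by rw [hcard]
    rw [hF]
    dsimp only
    have hfx : (⌊X⌋₊ : ℝ) ≤ X := Nat.floor_le hX.le
    calc ‖∑ n ∈ K, f n * (1 : DirichletCharacter ℂ q) (n : ZMod q)‖ ^ 2 *
          ‖∑ a ∈ A, rf a * (1 : DirichletCharacter ℂ q) (a : ZMod q)‖ ^ 2
        ≤ (⌊N⌋₊ : ℝ) ^ 2 * (∑ a ∈ A, r a) ^ 2 :=
          mul_le_mul (pow_le_pow_left₀ (norm_nonneg _) hSb 2)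
            (pow_le_pow_left₀ (norm_nonneg _) hRb 2)
            (pow_nonneg (norm_nonneg _) 2) (by positivity)
      _ ≤ N ^ 2 * ((⌊X⌋₊ : ℝ) * ∑ a ∈ A, r a ^ 2) :=
          mul_le_mul (pow_le_pow_left₀ (by positivity) (Nat.floor_le hN.le) 2) hCS
            (sq_nonneg _) (by positivity)
      _ ≤ N * (N * X) * ∑ a ∈ A, r a ^ 2 := by
          nlinarith [mul_le_mul_of_nonneg_left hfx (mul_nonneg (sq_nonneg N) hsum_nonneg)]
      _ ≤ N * (q : ℝ) * ∑ a ∈ A, r a ^ 2 := by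
          nlinarith [mul_le_mul_of_nonneg_right hNX (mul_nonneg hN.le hsum_nonneg)]
      _ = (q : ℝ) * N * ∑ a ∈ A, r a ^ 2 := by ring
  rw [hsplit, stepC]
  linarith [hP]
end

section
/- Let q be a prime, let N, X be positive real numbers with N·X ≤ q and 0 < X < q, let f be a completely multiplicative function with |f(n)| = 1 for all n, let r : ℕ → ℝ≥0 be a non-negative function not identically zero on [1, X], and set r_f(n) := f(n)r(n). With M_1 := ∑_{χ ≠ χ_0} |∑_{a ≤ X} r_f(a)χ(a)|^2 and M_2 := ∑_{χ ≠ χ_0} |∑_{n ≤ N} f(n)χ(n)|^2 |∑_{a ≤ X} r_f(a)χ(a)|^2, assume M_1 > 0. Then M_2 / M_1 ≥ (∑_{m,n ≤ N, a,b ≤ X, an = bm, q ∤ an} r(a)r(b)) / (∑_{n ≤ X} r(n)^2) − N·q/φ(q). -/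
open Finset

open scoped Classical in
private lemma orth_aux {q : ℕ} [Fact q.Prime] (u v : ZMod q) :
    ∑ χ : DirichletCharacter ℂ q, χ u * (starRingEnd ℂ) (χ v) =
      if IsUnit u ∧ u = v then (q.totient : ℂ) else 0 := by
  by_cases hv : IsUnit v
  · have hconj : ∀ χ : DirichletCharacter ℂ q, (starRingEnd ℂ) (χ v) = χ v⁻¹ := fun χ => by
      rw [show (starRingEnd ℂ) (χ v) = star (χ v) from rfl, MulChar.star_apply',
        MulChar.inv_apply']
    calc ∑ χ : DirichletCharacter ℂ q, χ u * (starRingEnd ℂ) (χ v)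
        = ∑ χ : DirichletCharacter ℂ q, χ v⁻¹ * χ u := by
          refine Finset.sum_congr rfl fun χ _ => ?_
          rw [hconj χ, mul_comm]
      _ = if v = u then (q.totient : ℂ) else 0 :=
          DirichletCharacter.sum_char_inv_mul_char_eq ℂ hv u
      _ = if IsUnit u ∧ u = v then (q.totient : ℂ) else 0 := by
          by_cases h : v = u
          · rw [if_pos h, if_pos ⟨h ▸ hv, h.symm⟩]
          · rw [if_neg h, if_neg (fun ⟨_, h'⟩ => h h'.symm)]
  · have h0 : ∀ χ : DirichletCharacter ℂ q, χ v = 0 := fun χ => χ.map_nonunit hv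
    rw [if_neg (by rintro ⟨hu, rfl⟩; exact hv hu)]
    simp [h0]

open scoped Classical in
private lemma key_aux {q : ℕ} [Fact q.Prime] {ι : Type*} (s : Finset ι) (w : ι → ℂ) (e : ι → ℕ) :
    ((∑ χ : DirichletCharacter ℂ q,
        (‖∑ i ∈ s, w i * χ ((e i : ZMod q))‖) ^ 2 : ℝ) : ℂ) =
      ∑ i ∈ s, ∑ j ∈ s,
        (if IsUnit ((e i : ZMod q)) ∧ ((e i : ZMod q) = (e j : ZMod q))
          then (q.totient : ℂ) * (w i * (starRingEnd ℂ) (w j)) else 0) := by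
  have habs : ∀ z : ℂ, ((‖z‖ : ℝ) : ℂ) ^ 2 = z * (starRingEnd ℂ) z := fun z => by
    rw [← Complex.ofReal_pow, Complex.sq_norm]
    exact (Complex.mul_conj z).symm
  push_cast
  calc ∑ χ : DirichletCharacter ℂ q,
        ((‖∑ i ∈ s, w i * χ ((e i : ZMod q))‖ : ℝ) : ℂ) ^ 2
      = ∑ χ : DirichletCharacter ℂ q, ∑ i ∈ s, ∑ j ∈ s,
          (w i * χ (e i : ZMod q)) *
            ((starRingEnd ℂ) (w j) * (starRingEnd ℂ) (χ (e j : ZMod q))) := by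
        refine Finset.sum_congr rfl fun χ _ => ?_
        rw [habs, map_sum, Finset.sum_mul_sum]
        exact Finset.sum_congr rfl fun i _ => Finset.sum_congr rfl fun j _ => by rw [map_mul]
    _ = ∑ i ∈ s, ∑ j ∈ s, (w i * (starRingEnd ℂ) (w j)) *
          ∑ χ : DirichletCharacter ℂ q, χ (e i : ZMod q) * (starRingEnd ℂ) (χ (e j : ZMod q)) := by
        rw [Finset.sum_comm]
        refine Finset.sum_congr rfl fun i _ => ?_
        rw [Finset.sum_comm]
        refine Finset.sum_congr rfl fun j _ => ?_
        rw [Finset.mul_sum]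
        exact Finset.sum_congr rfl fun χ _ => by ring
    _ = _ := by
        refine Finset.sum_congr rfl fun i _ => Finset.sum_congr rfl fun j _ => ?_
        rw [orth_aux]
        split_ifs with h
        · ring
        · rw [mul_zero]

set_option maxHeartbeats 1000000 in
/-- **Lower bound for the ratio `M₂/M₁`.** For a prime `q`, positive reals
`N, X` with `N·X ≤ q` and `X < q`, a completely multiplicative `f` of modulus
`1`, a non-negative `r : ℕ → ℝ` not identically zero on `[1, X]`, and
`r_f(n) = f(n)r(n)`, with `M₁ = ∑_{χ ≠ χ₀} |∑_{a ≤ X} r_f(a)χ(a)|²` and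
`M₂ = ∑_{χ ≠ χ₀} |∑_{n ≤ N} f(n)χ(n)|² |∑_{a ≤ X} r_f(a)χ(a)|²`, if `M₁ > 0`
then `M₂/M₁ ≥ (∑_{m,n ≤ N, a,b ≤ X, an = bm, q ∤ an} r(a)r(b)) / (∑_{n ≤ X} r(n)²)
  − N·q/φ(q)`. -/
theorem stmt_6 (q : ℕ) [Fact q.Prime] (N X : ℝ) (hN : 0 < N) (hX : 0 < X)
    (hNX : N * X ≤ q) (hXq : X < q)
    (f : ℕ → ℂ) (hf : ∀ m n : ℕ, f (m * n) = f m * f n)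
    (hf1 : ∀ n : ℕ, 0 < n → ‖f n‖ = 1)
    (r : ℕ → ℝ) (hr : ∀ n : ℕ, 0 ≤ r n)
    (hr0 : ∃ n ∈ Finset.Icc 1 ⌊X⌋₊, r n ≠ 0)
    (rf : ℕ → ℂ) (hrf : ∀ n : ℕ, rf n = f n * (r n : ℂ))
    (M₁ M₂ : ℝ)
    (hM₁ : M₁ = ∑ χ ∈ Finset.univ.filter (fun χ : DirichletCharacter ℂ q => χ ≠ 1),
      ‖∑ a ∈ Finset.Icc 1 ⌊X⌋₊, rf a * χ (a : ZMod q)‖ ^ 2)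
    (hM₂ : M₂ = ∑ χ ∈ Finset.univ.filter (fun χ : DirichletCharacter ℂ q => χ ≠ 1),
      ‖∑ n ∈ Finset.Icc 1 ⌊N⌋₊, f n * χ (n : ZMod q)‖ ^ 2 *
        ‖∑ a ∈ Finset.Icc 1 ⌊X⌋₊, rf a * χ (a : ZMod q)‖ ^ 2)
    (hM₁pos : 0 < M₁) :
    M₂ / M₁ ≥
      (∑ m ∈ Finset.Icc 1 ⌊N⌋₊, ∑ n ∈ Finset.Icc 1 ⌊N⌋₊,
          ∑ a ∈ Finset.Icc 1 ⌊X⌋₊, ∑ b ∈ Finset.Icc 1 ⌊X⌋₊,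
            if a * n = b * m ∧ ¬ (q ∣ a * n) then r a * r b else 0) /
        (∑ n ∈ Finset.Icc 1 ⌊X⌋₊, (r n) ^ 2) -
      N * (q : ℝ) / (Nat.totient q : ℝ) := by
  have hq : q.Prime := Fact.out
  have hq1 : 1 < q := hq.one_lt
  set T : Finset ℕ := Finset.Icc 1 ⌊X⌋₊ with hTdef
  set U : Finset ℕ := Finset.Icc 1 ⌊N⌋₊ with hUdef
  set S : ℝ := ∑ n ∈ T, r n ^ 2 with hSdef
  set Q : ℝ := ∑ m ∈ U, ∑ n ∈ U, ∑ a ∈ T, ∑ b ∈ T,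
      if a * n = b * m ∧ ¬ (q ∣ a * n) then r a * r b else 0 with hQdef
  set φR : ℝ := (q.totient : ℝ) with hφdef
  -- basic positivity facts
  have hφpos : 0 < φR := by
    rw [hφdef]
    exact_mod_cast Nat.totient_pos.mpr (by omega : 0 < q)
  have hSpos : 0 < S := by
    obtain ⟨n₀, hn₀, hn₀r⟩ := hr0
    rw [hSdef]
    refine Finset.sum_pos' (fun i _ => sq_nonneg _) ⟨n₀, hn₀, ?_⟩
    positivity
  -- size facts
  have hXfloor : (⌊X⌋₊ : ℝ) ≤ X := Nat.floor_le hX.le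
  have hNfloor : (⌊N⌋₊ : ℝ) ≤ N := Nat.floor_le hN.le
  have hXfloor_lt : ⌊X⌋₊ < q := by exact_mod_cast lt_of_le_of_lt hXfloor hXq
  have hUB : ⌊X⌋₊ * ⌊N⌋₊ ≤ q := by
    have h1 : (⌊X⌋₊ : ℝ) * (⌊N⌋₊ : ℝ) ≤ X * N :=
      mul_le_mul hXfloor hNfloor (by positivity) hX.le
    have h2 : (⌊X⌋₊ : ℝ) * (⌊N⌋₊ : ℝ) ≤ (q : ℝ) := h1.trans (by linarith [hNX])
    exact_mod_cast h2
  have hvalf : ∀ k : ℕ, 0 < k → f k * (starRingEnd ℂ) (f k) = 1 := fun k hk => by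
    rw [Complex.mul_conj, Complex.normSq_eq_norm_sq, hf1 k hk]
    norm_num
  have hTmem : ∀ a ∈ T, 1 ≤ a ∧ a < q := fun a ha => by
    rw [hTdef, Finset.mem_Icc] at ha
    exact ⟨ha.1, lt_of_le_of_lt ha.2 hXfloor_lt⟩
  have hcast_inj : ∀ {a b : ℕ}, a < q → b < q → ((a : ZMod q) = (b : ZMod q)) → a = b := by
    intro a b ha hb h
    have := (ZMod.natCast_eq_natCast_iff a b q).mp h
    rwa [Nat.ModEq, Nat.mod_eq_of_lt ha, Nat.mod_eq_of_lt hb] at this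
  have hunit : ∀ {a : ℕ}, ¬ q ∣ a → IsUnit (a : ZMod q) := by
    intro a hda
    have : (a : ZMod q) ≠ 0 := by
      rwa [Ne, ZMod.natCast_eq_zero_iff]
    exact isUnit_iff_ne_zero.mpr this
  have hnotdvd : ∀ {a : ℕ}, 1 ≤ a → a < q → ¬ q ∣ a := by
    intro a h1 h2 hd
    exact absurd (Nat.le_of_dvd (by omega) hd) (by omega)
  -- Step 1 : the full sum for M₁
  have hF1 : ∑ χ : DirichletCharacter ℂ q,
      (‖∑ a ∈ T, rf a * χ ((a : ZMod q))‖) ^ 2 = φR * S := by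
    apply Complex.ofReal_injective
    have hk := key_aux (q := q) T rf (fun a => a)
    rw [hk]
    have hinner : ∀ a ∈ T, (∑ b ∈ T,
        if IsUnit ((a : ZMod q)) ∧ ((a : ZMod q) = (b : ZMod q))
          then (q.totient : ℂ) * (rf a * (starRingEnd ℂ) (rf b)) else 0) =
        (q.totient : ℂ) * ((r a : ℂ) * (r a : ℂ)) := by
      intro a ha
      obtain ⟨ha1, ha2⟩ := hTmem a ha
      have hpt : ∀ b ∈ T,
          (if IsUnit ((a : ZMod q)) ∧ ((a : ZMod q) = (b : ZMod q))
            then (q.totient : ℂ) * (rf a * (starRingEnd ℂ) (rf b)) else 0) =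
          (if a = b then (q.totient : ℂ) * ((r b : ℂ) * (r a : ℂ)) else 0) := by
        intro b hb
        obtain ⟨hb1, hb2⟩ := hTmem b hb
        by_cases hab : a = b
        · subst hab
          rw [if_pos (⟨hunit (hnotdvd ha1 ha2), rfl⟩ :
            IsUnit ((a : ZMod q)) ∧ ((a : ZMod q) = (a : ZMod q))), if_pos rfl]
          congr 1
          rw [hrf a, map_mul, Complex.conj_ofReal]
          calc f a * (r a : ℂ) * ((starRingEnd ℂ) (f a) * (r a : ℂ))
              = (f a * (starRingEnd ℂ) (f a)) * ((r a : ℂ) * (r a : ℂ)) := by ring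
            _ = (r a : ℂ) * (r a : ℂ) := by rw [hvalf a ha1, one_mul]
        · rw [if_neg hab, if_neg (fun h => hab (hcast_inj ha2 hb2 h.2))]
      rw [Finset.sum_congr rfl hpt, Finset.sum_ite_eq, if_pos ha]
    rw [Finset.sum_congr rfl hinner, hφdef, hSdef]
    push_cast
    rw [Finset.mul_sum]
    exact Finset.sum_congr rfl fun a _ => by push_cast; ring
  -- Step 2 : the full sum for M₂
  have hF2 : ∑ χ : DirichletCharacter ℂ q,
      (‖∑ n ∈ U, f n * χ ((n : ZMod q))‖) ^ 2 *
        (‖∑ a ∈ T, rf a * χ ((a : ZMod q))‖) ^ 2 = φR * Q := by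
    apply Complex.ofReal_injective
    have hprod : ∀ χ : DirichletCharacter ℂ q,
        (‖∑ n ∈ U, f n * χ ((n : ZMod q))‖) ^ 2 *
          (‖∑ a ∈ T, rf a * χ ((a : ZMod q))‖) ^ 2 =
        (‖∑ p ∈ U ×ˢ T,
          (f (p.2 * p.1) * (r p.2 : ℂ)) * χ (((p.2 * p.1 : ℕ) : ZMod q))‖) ^ 2 := by
      intro χ
      rw [← mul_pow, ← norm_mul, Finset.sum_mul_sum, Finset.sum_product]
      congr 2
      refine Finset.sum_congr rfl fun n _ => Finset.sum_congr rfl fun a _ => ?_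
      rw [hrf a, hf a n, Nat.cast_mul, map_mul]
      ring
    simp only [hprod]
    have hk := key_aux (q := q) (U ×ˢ T) (fun p => f (p.2 * p.1) * (r p.2 : ℂ))
      (fun p => p.2 * p.1)
    rw [hk]
    have hterm : ∀ p ∈ U ×ˢ T, ∀ p' ∈ U ×ˢ T,
        (if IsUnit (((p.2 * p.1 : ℕ) : ZMod q)) ∧
            (((p.2 * p.1 : ℕ) : ZMod q) = ((p'.2 * p'.1 : ℕ) : ZMod q))
          then (q.totient : ℂ) * ((f (p.2 * p.1) * (r p.2 : ℂ)) *
            (starRingEnd ℂ) (f (p'.2 * p'.1) * (r p'.2 : ℂ))) else 0) =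
        (if p.2 * p.1 = p'.2 * p'.1 ∧ ¬ q ∣ p.2 * p.1
          then (q.totient : ℂ) * ((r p.2 : ℂ) * (r p'.2 : ℂ)) else 0) := by
      rintro ⟨n, a⟩ hp ⟨m, b⟩ hp'
      rw [Finset.mem_product] at hp hp'
      obtain ⟨hn, ha⟩ := hp
      obtain ⟨hm, hb⟩ := hp'
      rw [hUdef, Finset.mem_Icc] at hn hm
      rw [hTdef, Finset.mem_Icc] at ha hb
      simp only
      have han_le : a * n ≤ q := le_trans (Nat.mul_le_mul ha.2 hn.2) hUB
      have hbm_le : b * m ≤ q := le_trans (Nat.mul_le_mul hb.2 hm.2) hUB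
      by_cases hc : a * n = b * m ∧ ¬ q ∣ a * n
      · obtain ⟨hceq, hcdvd⟩ := hc
        have hcu : IsUnit (((a * n : ℕ) : ZMod q)) ∧
            (((a * n : ℕ) : ZMod q) = ((b * m : ℕ) : ZMod q)) :=
          ⟨hunit hcdvd, by rw [hceq]⟩
        rw [if_pos hcu, if_pos ⟨hceq, hcdvd⟩]
        congr 1
        rw [hceq, map_mul, Complex.conj_ofReal]
        have h1 : 0 < b * m := Nat.mul_pos (by omega) (by omega)
        calc f (b * m) * (r a : ℂ) * ((starRingEnd ℂ) (f (b * m)) * (r b : ℂ))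
            = (f (b * m) * (starRingEnd ℂ) (f (b * m))) * ((r a : ℂ) * (r b : ℂ)) := by ring
          _ = (r a : ℂ) * (r b : ℂ) := by rw [hvalf _ h1, one_mul]
      · rw [if_neg hc, if_neg]
        rintro ⟨hu, hcast⟩
        have hdvd : ¬ q ∣ a * n := fun hd => by
          rw [(ZMod.natCast_eq_zero_iff _ _).mpr hd] at hu
          exact not_isUnit_zero hu
        have hdvd' : ¬ q ∣ b * m := fun hd => by
          rw [hcast, (ZMod.natCast_eq_zero_iff _ _).mpr hd] at hu
          exact not_isUnit_zero hu
        have h1 : a * n < q := lt_of_le_of_ne han_le (fun h => hdvd (h ▸ dvd_refl q))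
        have h2 : b * m < q := lt_of_le_of_ne hbm_le (fun h => hdvd' (h ▸ dvd_refl q))
        exact hc ⟨hcast_inj h1 h2 hcast, hdvd⟩
    rw [Finset.sum_congr rfl (fun p hp => Finset.sum_congr rfl (fun p' hp' => hterm p hp p' hp'))]
    rw [Finset.sum_product]
    have hsub : ∀ n ∈ U, ∀ a ∈ T, (∑ p' ∈ U ×ˢ T,
        if a * n = p'.2 * p'.1 ∧ ¬ q ∣ a * n
          then (q.totient : ℂ) * ((r a : ℂ) * (r p'.2 : ℂ)) else 0) =
        ∑ m ∈ U, ∑ b ∈ T, (if a * n = b * m ∧ ¬ q ∣ a * n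
          then (q.totient : ℂ) * ((r a : ℂ) * (r b : ℂ)) else 0) := by
      intro n _ a _
      rw [Finset.sum_product]
    calc ∑ n ∈ U, ∑ a ∈ T, ∑ p' ∈ U ×ˢ T,
          (if a * n = p'.2 * p'.1 ∧ ¬ q ∣ a * n
            then (q.totient : ℂ) * ((r a : ℂ) * (r p'.2 : ℂ)) else 0)
        = ∑ n ∈ U, ∑ a ∈ T, ∑ m ∈ U, ∑ b ∈ T,
            (if a * n = b * m ∧ ¬ q ∣ a * n
              then (q.totient : ℂ) * ((r a : ℂ) * (r b : ℂ)) else 0) :=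
          Finset.sum_congr rfl fun n hn => Finset.sum_congr rfl fun a ha => hsub n hn a ha
      _ = ∑ n ∈ U, ∑ m ∈ U, ∑ a ∈ T, ∑ b ∈ T,
            (if a * n = b * m ∧ ¬ q ∣ a * n
              then (q.totient : ℂ) * ((r a : ℂ) * (r b : ℂ)) else 0) :=
          Finset.sum_congr rfl fun n _ => Finset.sum_comm
      _ = ∑ m ∈ U, ∑ n ∈ U, ∑ a ∈ T, ∑ b ∈ T,
            (if a * n = b * m ∧ ¬ q ∣ a * n
              then (q.totient : ℂ) * ((r a : ℂ) * (r b : ℂ)) else 0) := Finset.sum_comm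
      _ = ((φR * Q : ℝ) : ℂ) := by
          rw [hφdef, hQdef]
          push_cast
          rw [Finset.mul_sum]
          refine Finset.sum_congr rfl fun m _ => ?_
          rw [Finset.mul_sum]
          refine Finset.sum_congr rfl fun n _ => ?_
          rw [Finset.mul_sum]
          refine Finset.sum_congr rfl fun a _ => ?_
          rw [Finset.mul_sum]
          refine Finset.sum_congr rfl fun b _ => ?_
          split_ifs with h
          · push_cast; ring
          · simp
  -- Step 3 : splitting off the principal character
  have hsplit : ∀ g : DirichletCharacter ℂ q → ℝ,
      ∑ χ : DirichletCharacter ℂ q, g χ =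
        g 1 + ∑ χ ∈ Finset.univ.filter (fun χ : DirichletCharacter ℂ q => χ ≠ 1), g χ := by
    intro g
    have h1 : Finset.univ.filter (fun χ : DirichletCharacter ℂ q => ¬ χ ≠ 1) = {1} := by
      ext χ; simp
    rw [← Finset.sum_filter_add_sum_filter_not Finset.univ
      (fun χ : DirichletCharacter ℂ q => χ ≠ 1) g, h1, Finset.sum_singleton, add_comm]
  -- bounds on the principal character terms
  have hA1 : (‖∑ a ∈ T, rf a * (1 : DirichletCharacter ℂ q) ((a : ZMod q))‖) ^ 2
      ≤ X * S := by
    have habs : ‖∑ a ∈ T, rf a * (1 : DirichletCharacter ℂ q) ((a : ZMod q))‖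
        ≤ ∑ a ∈ T, r a := by
      refine le_trans (norm_sum_le _ _) (Finset.sum_le_sum fun a ha => ?_)
      rw [norm_mul, hrf a, norm_mul, Complex.norm_real, Real.norm_eq_abs, abs_of_nonneg (hr a),
        hf1 a (hTmem a ha).1, one_mul]
      have h1 : ‖(1 : DirichletCharacter ℂ q) ((a : ZMod q))‖ ≤ 1 := by
        exact DirichletCharacter.norm_le_one _ _
      nlinarith [hr a]
    have hsq : (∑ a ∈ T, r a) ^ 2 ≤ (T.card : ℝ) * S := by
      rw [hSdef]
      exact_mod_cast sq_sum_le_card_mul_sum_sq (s := T) (f := r)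
    have hcard : (T.card : ℝ) ≤ X := by
      rw [hTdef, Nat.card_Icc]
      simpa using hXfloor
    have h0 : (0 : ℝ) ≤ ‖∑ a ∈ T, rf a *
        (1 : DirichletCharacter ℂ q) ((a : ZMod q))‖ := norm_nonneg _
    have hrs : (0 : ℝ) ≤ ∑ a ∈ T, r a := Finset.sum_nonneg fun a _ => hr a
    calc (‖∑ a ∈ T, rf a * (1 : DirichletCharacter ℂ q) ((a : ZMod q))‖) ^ 2
        ≤ (∑ a ∈ T, r a) ^ 2 := by nlinarith
      _ ≤ (T.card : ℝ) * S := hsq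
      _ ≤ X * S := by nlinarith
  have hB1 : (‖∑ n ∈ U, f n * (1 : DirichletCharacter ℂ q) ((n : ZMod q))‖) ^ 2
      ≤ N ^ 2 := by
    have habs : ‖∑ n ∈ U, f n * (1 : DirichletCharacter ℂ q) ((n : ZMod q))‖
        ≤ (U.card : ℝ) := by
      refine le_trans (norm_sum_le _ _) ?_
      calc ∑ n ∈ U, ‖f n * (1 : DirichletCharacter ℂ q) ((n : ZMod q))‖
          ≤ ∑ _n ∈ U, (1 : ℝ) := by
            refine Finset.sum_le_sum fun n hn => ?_
            rw [hUdef, Finset.mem_Icc] at hn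
            rw [norm_mul, hf1 n (by omega), one_mul]
            exact DirichletCharacter.norm_le_one _ _
        _ = (U.card : ℝ) := by simp
    have hcard : (U.card : ℝ) ≤ N := by
      rw [hUdef, Nat.card_Icc]
      simpa using hNfloor
    have h0 : (0 : ℝ) ≤ ‖∑ n ∈ U, f n *
        (1 : DirichletCharacter ℂ q) ((n : ZMod q))‖ := norm_nonneg _
    nlinarith
  -- decompose M₁ and M₂
  have hM₁' : φR * S = (‖∑ a ∈ T, rf a *
      (1 : DirichletCharacter ℂ q) ((a : ZMod q))‖) ^ 2 + M₁ := by
    rw [hM₁, ← hF1]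
    exact hsplit (fun χ => (‖∑ a ∈ T, rf a * χ ((a : ZMod q))‖) ^ 2)
  have hM₂' : φR * Q = (‖∑ n ∈ U, f n *
        (1 : DirichletCharacter ℂ q) ((n : ZMod q))‖) ^ 2 *
      (‖∑ a ∈ T, rf a * (1 : DirichletCharacter ℂ q) ((a : ZMod q))‖) ^ 2 + M₂ := by
    rw [hM₂, ← hF2]
    exact hsplit (fun χ => (‖∑ n ∈ U, f n * χ ((n : ZMod q))‖) ^ 2 *
      (‖∑ a ∈ T, rf a * χ ((a : ZMod q))‖) ^ 2)
  have hM1le : M₁ ≤ φR * S := by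
    nlinarith [sq_nonneg (‖∑ a ∈ T, rf a *
      (1 : DirichletCharacter ℂ q) ((a : ZMod q))‖)]
  have hM2ge : φR * Q - N * q * S ≤ M₂ := by
    have ht : (‖∑ n ∈ U, f n * (1 : DirichletCharacter ℂ q) ((n : ZMod q))‖) ^ 2 *
        (‖∑ a ∈ T, rf a * (1 : DirichletCharacter ℂ q) ((a : ZMod q))‖) ^ 2
        ≤ N * q * S := by
      have hXS : 0 ≤ X * S := by positivity
      have hb0 := sq_nonneg (‖∑ n ∈ U, f n *
        (1 : DirichletCharacter ℂ q) ((n : ZMod q))‖)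
      have ha0 := sq_nonneg (‖∑ a ∈ T, rf a *
        (1 : DirichletCharacter ℂ q) ((a : ZMod q))‖)
      have h1 : (‖∑ n ∈ U, f n * (1 : DirichletCharacter ℂ q) ((n : ZMod q))‖) ^ 2 *
          (‖∑ a ∈ T, rf a * (1 : DirichletCharacter ℂ q) ((a : ZMod q))‖) ^ 2
          ≤ N ^ 2 * (X * S) := by nlinarith
      have h2 : N ^ 2 * (X * S) ≤ N * q * S := by
        nlinarith [mul_nonneg (mul_nonneg hN.le hSpos.le) (sub_nonneg.mpr hNX)]
      linarith
    linarith
  have hM2nonneg : 0 ≤ M₂ := by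
    rw [hM₂]
    exact Finset.sum_nonneg fun χ _ => mul_nonneg (sq_nonneg _) (sq_nonneg _)
  -- final algebra
  rw [ge_iff_le]
  have hRHS : Q / S - N * q / φR = (φR * Q - N * q * S) / (φR * S) := by
    field_simp
  rw [hRHS]
  by_cases hc : 0 < φR * Q - N * q * S
  · calc (φR * Q - N * q * S) / (φR * S)
        ≤ (φR * Q - N * q * S) / M₁ := div_le_div_of_nonneg_left hc.le hM₁pos hM1le
      _ ≤ M₂ / M₁ := (div_le_div_iff_of_pos_right hM₁pos).mpr hM2ge
  · push_neg at hc
    have h1 : (φR * Q - N * q * S) / (φR * S) ≤ 0 :=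
      div_nonpos_of_nonpos_of_nonneg hc (by positivity)
    have h2 : 0 ≤ M₂ / M₁ := div_nonneg hM2nonneg hM₁pos.le
    linarith
end
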